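/- arXiv:1806.04119 — 4 statements merged into one kernel-verified Lean document; each statement's English description precedes it below -/
import Mathlib

section
/- Let I be a nonempty index set, (Ω, ℱ, P) a probability space, {A_M : M ∈ I} a family of events, and α ∈ [0,1]. Then the following are equivalent: (1) for every measurable random selection M̂ : Ω → I, P(ω ∈ A_{M̂(ω)}) ≥ 1 − α; (2) P(⋂_{M ∈ I} A_M) ≥ 1 − α. -/
open MeasureTheory

theorem stmt0 {Ω I : Type*} [Fintype I] [Nonempty I]
    [MeasurableSpace Ω] [MeasurableSpace I] [MeasurableSingletonClass I]
    (P : Measure Ω) [IsProbabilityMeasure P]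
    (A : I → Set Ω) (hA : ∀ M, MeasurableSet (A M))
    (α : ℝ) (hα : α ∈ Set.Icc (0 : ℝ) 1) :
    (∀ Mhat : Ω → I, Measurable Mhat →
        ENNReal.ofReal (1 - α) ≤ P {ω | ω ∈ A (Mhat ω)}) ↔
      ENNReal.ofReal (1 - α) ≤ P (⋂ M, A M) := by
  classical
  constructor
  · intro h
    set e := Fintype.equivFin I with he
    -- the set of "bad" indices for ω
    let bad : Ω → Finset (Fin (Fintype.card I)) :=
      fun ω => Finset.univ.filter (fun k => ω ∉ A (e.symm k))
    let Mhat : Ω → I := fun ω =>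
      if hω : (bad ω).Nonempty then e.symm ((bad ω).min' hω)
      else Classical.arbitrary I
    have key : {ω | ω ∈ A (Mhat ω)} = ⋂ M, A M := by
      ext ω
      simp only [Set.mem_setOf_eq, Set.mem_iInter]
      constructor
      · intro hω M
        by_contra hM
        have hne : (bad ω).Nonempty := ⟨e M, by simp [bad, hM]⟩
        have hmin := (bad ω).min'_mem hne
        simp only [bad, Finset.mem_filter] at hmin
        have : Mhat ω = e.symm ((bad ω).min' hne) := dif_pos hne
        rw [this] at hω
        exact hmin.2 hω
      · intro hω
        exact hω (Mhat ω)
    have hmeas : Measurable Mhat := by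
      apply measurable_to_countable
      intro y
      set M := Mhat y with hM
      have hsplit : Mhat ⁻¹' {M} =
          ((⋂ N, A N) ∩ {ω | Classical.arbitrary I = M}) ∪
          ((A M)ᶜ ∩ ⋂ j : Fin (Fintype.card I), ⋂ _ : j < e M, A (e.symm j)) := by
        ext ω
        simp only [Set.mem_preimage, Set.mem_singleton_iff, Set.mem_union,
          Set.mem_inter_iff, Set.mem_iInter, Set.mem_setOf_eq, Set.mem_compl_iff]
        by_cases hne : (bad ω).Nonempty
        · have hMhat : Mhat ω = e.symm ((bad ω).min' hne) := dif_pos hne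
          constructor
          · intro hEq
            right
            have hmin : (bad ω).min' hne = e M := by
              have := hEq
              rw [hMhat] at this
              have := congrArg e this
              simpa using this
            have hmem := (bad ω).min'_mem hne
            rw [hmin] at hmem
            simp only [bad, Finset.mem_filter] at hmem
            refine ⟨by simpa using hmem.2, fun j hj => ?_⟩
            by_contra hja
            have hjb : j ∈ bad ω := by simp [bad, hja]
            have := (bad ω).min'_le j hjb
            rw [hmin] at this
            exact absurd this (not_le.mpr hj)
          · rintro (⟨hall, _⟩ | ⟨hAM, hbelow⟩)
            · exfalso
              obtain ⟨k, hk⟩ := hne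
              simp only [bad, Finset.mem_filter] at hk
              exact hk.2 (hall _)
            · have hmemM : e M ∈ bad ω := by simp [bad, hAM]
              have hle := (bad ω).min'_le _ hmemM
              have hge : e M ≤ (bad ω).min' hne := by
                by_contra hlt
                push_neg at hlt
                have hmem := (bad ω).min'_mem hne
                simp only [bad, Finset.mem_filter] at hmem
                exact hmem.2 (hbelow _ hlt)
              have hmin : (bad ω).min' hne = e M := le_antisymm hle hge
              rw [hMhat, hmin]; simp
        · have hMhat : Mhat ω = Classical.arbitrary I := dif_neg hne
          have hall : ∀ N, ω ∈ A N := by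
            intro N
            by_contra hN
            exact hne ⟨e N, by simp [bad, hN]⟩
          constructor
          · intro hEq
            left
            exact ⟨hall, by rw [← hMhat]; exact hEq⟩
          · rintro (⟨_, harb⟩ | ⟨hAM, _⟩)
            · rw [hMhat]; exact harb
            · exact absurd (hall M) hAM
      rw [hsplit]
      apply MeasurableSet.union
      · apply (MeasurableSet.iInter fun N => hA N).inter
        by_cases hc : Classical.arbitrary I = M
        · have : {ω : Ω | Classical.arbitrary I = M} = Set.univ := by
            ext; simp [hc]
          rw [this]; exact MeasurableSet.univ
        · have : {ω : Ω | Classical.arbitrary I = M} = ∅ := by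
            ext; simp [hc]
          rw [this]; exact MeasurableSet.empty
      · exact (hA M).compl.inter
          (MeasurableSet.iInter fun j => MeasurableSet.iInter fun _ => hA _)
    have := h Mhat hmeas
    rwa [key] at this
  · intro h Mhat hMhat
    refine le_trans h (measure_mono ?_)
    intro ω hω
    exact Set.mem_iInter.mp hω _
end

section
/- Let Σ̂, Σ ∈ ℝ^{p×p} be symmetric, Γ̂, Γ ∈ ℝ^p, and define D^Σ = ∥Σ̂ − Σ∥_∞, D^Γ = ∥Γ̂ − Γ∥_∞. Let Λ(k) = min over M ⊆ {1,…,p} with 1 ≤ |M| ≤ k of λ_min(Σ(M)). Suppose k ≥ 1 satisfies k D^Σ < Λ(k). Then for every M with 1 ≤ |M| ≤ k, and β̂_M, β_M satisfying Σ̂(M)β̂_M = Γ̂(M) and Σ(M)β_M = Γ(M), we have ∥β̂_M − β_M∥₁ ≤ |M| (D^Γ + D^Σ ∥β_M∥₁) / (Λ(k) − k D^Σ). -/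
theorem stmt7 {p : ℕ} (Sh S : Fin p → Fin p → ℝ) (Gh G : Fin p → ℝ)
    (hSh : ∀ i j, Sh i j = Sh j i) (hS : ∀ i j, S i j = S j i)
    (k : ℕ) (Λ : ℝ)
    (hΛ : ∀ M : Finset (Fin p), 1 ≤ M.card → M.card ≤ k →
      ∀ θ : ↥M → ℝ, Λ * ∑ i : M, (θ i) ^ 2 ≤ ∑ i : M, ∑ j : M, θ i * S i.1 j.1 * θ j)
    (hgap : (k : ℝ) * ‖Sh - S‖ < Λ)
    (M : Finset (Fin p)) (hM1 : 1 ≤ M.card) (hMk : M.card ≤ k)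
    (βh β : ↥M → ℝ)
    (hβh : ∀ i : M, ∑ j : M, Sh i.1 j.1 * βh j = Gh i.1)
    (hβ : ∀ i : M, ∑ j : M, S i.1 j.1 * β j = G i.1) :
    ∑ i : M, |βh i - β i| ≤
      (M.card : ℝ) * (‖Gh - G‖ + ‖Sh - S‖ * ∑ i : M, |β i|) /
        (Λ - (k : ℝ) * ‖Sh - S‖) := by
  set Ds := ‖Sh - S‖ with hDsdef
  set Dg := ‖Gh - G‖ with hDgdef
  have hDs0 : 0 ≤ Ds := norm_nonneg _
  have hDg0 : 0 ≤ Dg := norm_nonneg _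
  have hSb : ∀ i j : Fin p, |Sh i j - S i j| ≤ Ds := by
    intro i j
    calc |Sh i j - S i j| = ‖(Sh - S) i j‖ := by simp [Real.norm_eq_abs]
      _ ≤ ‖(Sh - S) i‖ := norm_le_pi_norm _ j
      _ ≤ Ds := norm_le_pi_norm _ i
  have hGb : ∀ i : Fin p, |Gh i - G i| ≤ Dg := by
    intro i
    calc |Gh i - G i| = ‖(Gh - G) i‖ := by simp [Real.norm_eq_abs]
      _ ≤ Dg := norm_le_pi_norm _ i
  set δ : ↥M → ℝ := fun i => βh i - β i with hδ
  set T := ∑ i : M, |δ i| with hT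
  set Q := ∑ i : M, (δ i) ^ 2 with hQ
  set L := ∑ i : M, |β i| with hL
  set n := (M.card : ℝ) with hn
  have hL0 : 0 ≤ L := Finset.sum_nonneg fun _ _ => abs_nonneg _
  have hT0 : 0 ≤ T := Finset.sum_nonneg fun _ _ => abs_nonneg _
  have hQ0 : 0 ≤ Q := Finset.sum_nonneg fun _ _ => sq_nonneg _
  have hn0 : 0 ≤ n := Nat.cast_nonneg _
  have hnk : n ≤ (k : ℝ) := by rw [hn]; exact_mod_cast hMk
  have hden : 0 < Λ - (k : ℝ) * Ds := by linarith
  -- key identity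
  have key : ∀ i : M, ∑ j : M, Sh i.1 j.1 * δ j
      = (Gh i.1 - G i.1) - ∑ j : M, (Sh i.1 j.1 - S i.1 j.1) * β j := by
    intro i
    have h1 := hβh i
    have h2 := hβ i
    have e1 : ∑ j : M, Sh i.1 j.1 * δ j
        = (∑ j : M, Sh i.1 j.1 * βh j) - ∑ j : M, Sh i.1 j.1 * β j := by
      rw [← Finset.sum_sub_distrib]
      exact Finset.sum_congr rfl fun j _ => by simp [hδ]; ring
    have e2 : ∑ j : M, (Sh i.1 j.1 - S i.1 j.1) * β j
        = (∑ j : M, Sh i.1 j.1 * β j) - ∑ j : M, S i.1 j.1 * β j := by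
      rw [← Finset.sum_sub_distrib]
      exact Finset.sum_congr rfl fun j _ => by ring
    rw [e1, e2, h1, h2]
    ring
  set A := ∑ i : M, ∑ j : M, δ i * Sh i.1 j.1 * δ j with hA
  -- upper bound for A
  have hA_eq : A = ∑ i : M, δ i *
      ((Gh i.1 - G i.1) - ∑ j : M, (Sh i.1 j.1 - S i.1 j.1) * β j) := by
    refine Finset.sum_congr rfl fun i _ => ?_
    rw [← key i, Finset.mul_sum]
    exact Finset.sum_congr rfl fun j _ => by ring
  have hR : ∀ i : M, |(Gh i.1 - G i.1) - ∑ j : M, (Sh i.1 j.1 - S i.1 j.1) * β j|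
      ≤ Dg + Ds * L := by
    intro i
    refine (abs_sub _ _).trans ?_
    have hs : |∑ j : M, (Sh i.1 j.1 - S i.1 j.1) * β j| ≤ Ds * L := by
      calc |∑ j : M, (Sh i.1 j.1 - S i.1 j.1) * β j|
          ≤ ∑ j : M, |(Sh i.1 j.1 - S i.1 j.1) * β j| := Finset.abs_sum_le_sum_abs _ _
        _ ≤ ∑ j : M, Ds * |β j| := Finset.sum_le_sum fun j _ => by
            rw [abs_mul]; exact mul_le_mul_of_nonneg_right (hSb _ _) (abs_nonneg _)
        _ = Ds * L := by rw [hL, Finset.mul_sum]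
    have := hGb i.1
    linarith
  have hA_le : A ≤ T * (Dg + Ds * L) := by
    rw [hA_eq, hT, Finset.sum_mul]
    refine Finset.sum_le_sum fun i _ => ?_
    calc δ i * ((Gh i.1 - G i.1) - ∑ j : M, (Sh i.1 j.1 - S i.1 j.1) * β j)
        ≤ |δ i * ((Gh i.1 - G i.1) - ∑ j : M, (Sh i.1 j.1 - S i.1 j.1) * β j)| :=
          le_abs_self _
      _ = |δ i| * |(Gh i.1 - G i.1) - ∑ j : M, (Sh i.1 j.1 - S i.1 j.1) * β j| := abs_mul _ _
      _ ≤ |δ i| * (Dg + Ds * L) :=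
          mul_le_mul_of_nonneg_left (hR i) (abs_nonneg _)
  -- lower bound for A
  have hsplit : A = (∑ i : M, ∑ j : M, δ i * S i.1 j.1 * δ j)
      + ∑ i : M, ∑ j : M, δ i * (Sh i.1 j.1 - S i.1 j.1) * δ j := by
    rw [hA, ← Finset.sum_add_distrib]
    refine Finset.sum_congr rfl fun i _ => ?_
    rw [← Finset.sum_add_distrib]
    exact Finset.sum_congr rfl fun j _ => by ring
  have hTT : T * T = ∑ i : M, ∑ j : M, |δ i| * |δ j| := by
    rw [hT, Finset.sum_mul_sum]
  have herr : |∑ i : M, ∑ j : M, δ i * (Sh i.1 j.1 - S i.1 j.1) * δ j| ≤ Ds * (T * T) := by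
    calc |∑ i : M, ∑ j : M, δ i * (Sh i.1 j.1 - S i.1 j.1) * δ j|
        ≤ ∑ i : M, |∑ j : M, δ i * (Sh i.1 j.1 - S i.1 j.1) * δ j| :=
          Finset.abs_sum_le_sum_abs _ _
      _ ≤ ∑ i : M, ∑ j : M, |δ i * (Sh i.1 j.1 - S i.1 j.1) * δ j| :=
          Finset.sum_le_sum fun i _ => Finset.abs_sum_le_sum_abs _ _
      _ ≤ ∑ i : M, ∑ j : M, Ds * (|δ i| * |δ j|) := by
          refine Finset.sum_le_sum fun i _ => Finset.sum_le_sum fun j _ => ?_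
          rw [abs_mul, abs_mul]
          have h1 : |δ i| * |Sh i.1 j.1 - S i.1 j.1| ≤ |δ i| * Ds :=
            mul_le_mul_of_nonneg_left (hSb _ _) (abs_nonneg _)
          have := mul_le_mul_of_nonneg_right h1 (abs_nonneg (δ j))
          nlinarith [abs_nonneg (δ i), abs_nonneg (δ j)]
      _ = Ds * (T * T) := by
          rw [hTT, Finset.mul_sum]
          exact Finset.sum_congr rfl fun i _ => by rw [Finset.mul_sum]
  have hquad : Λ * Q ≤ ∑ i : M, ∑ j : M, δ i * S i.1 j.1 * δ j := hΛ M hM1 hMk δ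
  have hlow : Λ * Q - Ds * (T * T) ≤ A := by
    have := (abs_le.mp herr).1
    linarith [hsplit ▸ (by linarith : Λ * Q - Ds * (T * T) ≤
      (∑ i : M, ∑ j : M, δ i * S i.1 j.1 * δ j)
      + ∑ i : M, ∑ j : M, δ i * (Sh i.1 j.1 - S i.1 j.1) * δ j)]
  -- Cauchy-Schwarz: T^2 ≤ n * Q
  have hCS : T ^ 2 ≤ n * Q := by
    have h := Finset.sum_mul_sq_le_sq_mul_sq Finset.univ (fun _ : M => (1 : ℝ))
      (fun i => |δ i|)
    simp only [one_mul, one_pow, sq_abs] at h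
    have hcard : (∑ _i : M, (1 : ℝ)) = n := by simp [hn, Finset.card_univ]
    rw [hT, hQ, ← hcard]
    exact h
  -- combine
  rw [le_div_iff₀ hden]
  clear_value Ds Dg δ T Q L n A
  clear hΛ hβh hβ key hA_eq hR hsplit hTT herr hquad hSb hGb hT hQ hL hA hδ
    hDsdef hDgdef hn hSh hS
  rcases eq_or_lt_of_le hT0 with h0 | hpos
  · rw [← h0, zero_mul]
    exact mul_nonneg hn0 (by positivity)
  · have hstep : (Λ - (k : ℝ) * Ds) * Q ≤ T * (Dg + Ds * L) := by
      nlinarith [hlow, hA_le, mul_le_mul_of_nonneg_left hCS hDs0,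
        mul_le_mul_of_nonneg_right (mul_le_mul_of_nonneg_left hnk hDs0) hQ0]
    nlinarith [mul_le_mul_of_nonneg_left hstep hn0,
      mul_le_mul_of_nonneg_right hCS hden.le, hpos]
end

section
/- Under the setting of the previous lemma (symmetric Σ̂, Σ ∈ ℝ^{p×p}, vectors Γ̂, Γ ∈ ℝ^p, D^Σ = ∥Σ̂ − Σ∥_∞, D^Γ = ∥Γ̂ − Γ∥_∞, Λ(k) = min_{|M|≤k} λ_min(Σ(M)), and k D^Σ < Λ(k)), for every M with 1 ≤ |M| ≤ k, the relative error satisfies |(D^Γ + D^Σ∥β̂_M∥₁)/(D^Γ + D^Σ∥β_M∥₁) − 1| ≤ k D^Σ / (Λ(k) − k D^Σ), provided D^Γ + D^Σ∥β_M∥₁ > 0. -/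
theorem stmt8 {p : ℕ} (Sh S : Fin p → Fin p → ℝ) (Gh G : Fin p → ℝ)
    (hSh : ∀ i j, Sh i j = Sh j i) (hS : ∀ i j, S i j = S j i)
    (k : ℕ) (Λ : ℝ)
    (hΛ : ∀ M : Finset (Fin p), 1 ≤ M.card → M.card ≤ k →
      ∀ θ : ↥M → ℝ, Λ * ∑ i : M, (θ i) ^ 2 ≤ ∑ i : M, ∑ j : M, θ i * S i.1 j.1 * θ j)
    (hgap : (k : ℝ) * ‖Sh - S‖ < Λ)
    (M : Finset (Fin p)) (hM1 : 1 ≤ M.card) (hMk : M.card ≤ k)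
    (βh β : ↥M → ℝ)
    (hβh : ∀ i : M, ∑ j : M, Sh i.1 j.1 * βh j = Gh i.1)
    (hβ : ∀ i : M, ∑ j : M, S i.1 j.1 * β j = G i.1)
    (hpos : 0 < ‖Gh - G‖ + ‖Sh - S‖ * ∑ i : M, |β i|) :
    |(‖Gh - G‖ + ‖Sh - S‖ * ∑ i : M, |βh i|) /
        (‖Gh - G‖ + ‖Sh - S‖ * ∑ i : M, |β i|) - 1| ≤
      (k : ℝ) * ‖Sh - S‖ / (Λ - (k : ℝ) * ‖Sh - S‖) := by
  set D := ‖Sh - S‖ with hDdef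
  set DG := ‖Gh - G‖ with hDGdef
  have hD0 : (0:ℝ) ≤ D := norm_nonneg _
  have hDG0 : (0:ℝ) ≤ DG := norm_nonneg _
  have hDij : ∀ i j, |Sh i j - S i j| ≤ D := by
    intro i j
    calc |Sh i j - S i j| = ‖(Sh - S) i j‖ := by simp [Real.norm_eq_abs]
    _ ≤ ‖(Sh - S) i‖ := norm_le_pi_norm _ j
    _ ≤ D := norm_le_pi_norm _ i
  have hDGi : ∀ i, |Gh i - G i| ≤ DG := by
    intro i
    calc |Gh i - G i| = ‖(Gh - G) i‖ := by simp [Real.norm_eq_abs]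
    _ ≤ DG := norm_le_pi_norm _ i
  set δ : ↥M → ℝ := fun i => βh i - β i with hδ
  set L1 : ℝ := ∑ i : M, |δ i| with hL1def
  set B : ℝ := ∑ i : M, |β i| with hBdef
  set Bh : ℝ := ∑ i : M, |βh i| with hBhdef
  have hL10 : 0 ≤ L1 := Finset.sum_nonneg fun i _ => abs_nonneg _
  have hk1 : 1 ≤ (k:ℝ) := by exact_mod_cast le_trans hM1 hMk
  have hc : 0 < Λ - (k:ℝ) * D := by linarith
  -- Step A : residual equation
  have hA : ∀ i : M, ∑ j : M, Sh i.1 j.1 * δ j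
      = (Gh i.1 - G i.1) - ∑ j : M, (Sh i.1 j.1 - S i.1 j.1) * β j := by
    intro i
    have e1 : ∑ j : M, Sh i.1 j.1 * δ j
        = (∑ j : M, Sh i.1 j.1 * βh j) - ∑ j : M, Sh i.1 j.1 * β j := by
      rw [← Finset.sum_sub_distrib]
      exact Finset.sum_congr rfl fun j _ => by simp [hδ]; ring
    have e2 : ∑ j : M, (Sh i.1 j.1 - S i.1 j.1) * β j
        = (∑ j : M, Sh i.1 j.1 * β j) - ∑ j : M, S i.1 j.1 * β j := by
      rw [← Finset.sum_sub_distrib]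
      exact Finset.sum_congr rfl fun j _ => by ring
    rw [e1, e2, hβh i, hβ i]
    ring
  -- upper bound on the quadratic form with Sh
  have key_i : ∀ i : M, δ i * ∑ j : M, Sh i.1 j.1 * δ j ≤ |δ i| * (DG + D * B) := by
    intro i
    rw [hA i]
    have h1 : |∑ j : M, (Sh i.1 j.1 - S i.1 j.1) * β j| ≤ D * B := by
      calc |∑ j : M, (Sh i.1 j.1 - S i.1 j.1) * β j|
          ≤ ∑ j : M, |(Sh i.1 j.1 - S i.1 j.1) * β j| := Finset.abs_sum_le_sum_abs _ _
        _ ≤ ∑ j : M, D * |β j| := by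
            refine Finset.sum_le_sum fun j _ => ?_
            rw [abs_mul]
            exact mul_le_mul_of_nonneg_right (hDij _ _) (abs_nonneg _)
        _ = D * B := by rw [hBdef, Finset.mul_sum]
    have h2 : |(Gh i.1 - G i.1) - ∑ j : M, (Sh i.1 j.1 - S i.1 j.1) * β j| ≤ DG + D * B := by
      calc |(Gh i.1 - G i.1) - ∑ j : M, (Sh i.1 j.1 - S i.1 j.1) * β j|
          ≤ |Gh i.1 - G i.1| + |∑ j : M, (Sh i.1 j.1 - S i.1 j.1) * β j| := abs_sub _ _
        _ ≤ DG + D * B := add_le_add (hDGi _) h1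
    calc δ i * ((Gh i.1 - G i.1) - ∑ j : M, (Sh i.1 j.1 - S i.1 j.1) * β j)
        ≤ |δ i * ((Gh i.1 - G i.1) - ∑ j : M, (Sh i.1 j.1 - S i.1 j.1) * β j)| := le_abs_self _
      _ = |δ i| * |(Gh i.1 - G i.1) - ∑ j : M, (Sh i.1 j.1 - S i.1 j.1) * β j| := abs_mul _ _
      _ ≤ |δ i| * (DG + D * B) := mul_le_mul_of_nonneg_left h2 (abs_nonneg _)
  have hQup : ∑ i : M, ∑ j : M, δ i * Sh i.1 j.1 * δ j ≤ L1 * (DG + D * B) := by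
    have e : ∀ i : M, ∑ j : M, δ i * Sh i.1 j.1 * δ j = δ i * ∑ j : M, Sh i.1 j.1 * δ j := by
      intro i; rw [Finset.mul_sum]; exact Finset.sum_congr rfl fun j _ => by ring
    calc ∑ i : M, ∑ j : M, δ i * Sh i.1 j.1 * δ j
        = ∑ i : M, δ i * ∑ j : M, Sh i.1 j.1 * δ j := Finset.sum_congr rfl fun i _ => e i
      _ ≤ ∑ i : M, |δ i| * (DG + D * B) := Finset.sum_le_sum fun i _ => key_i i
      _ = L1 * (DG + D * B) := by rw [hL1def, Finset.sum_mul]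
  -- perturbation bound
  have hpert : |∑ i : M, ∑ j : M, δ i * (Sh i.1 j.1 - S i.1 j.1) * δ j| ≤ D * (L1 * L1) := by
    calc |∑ i : M, ∑ j : M, δ i * (Sh i.1 j.1 - S i.1 j.1) * δ j|
        ≤ ∑ i : M, |∑ j : M, δ i * (Sh i.1 j.1 - S i.1 j.1) * δ j| := Finset.abs_sum_le_sum_abs _ _
      _ ≤ ∑ i : M, ∑ j : M, |δ i * (Sh i.1 j.1 - S i.1 j.1) * δ j| :=
          Finset.sum_le_sum fun i _ => Finset.abs_sum_le_sum_abs _ _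
      _ ≤ ∑ i : M, ∑ j : M, |δ i| * D * |δ j| := by
          refine Finset.sum_le_sum fun i _ => Finset.sum_le_sum fun j _ => ?_
          rw [abs_mul, abs_mul]
          have := hDij i.1 j.1
          have h := mul_le_mul_of_nonneg_left this (abs_nonneg (δ i))
          exact mul_le_mul_of_nonneg_right h (abs_nonneg _)
      _ = D * (L1 * L1) := by
          rw [hL1def]
          rw [Finset.sum_mul, Finset.mul_sum]
          refine Finset.sum_congr rfl fun i _ => ?_
          rw [Finset.mul_sum, Finset.mul_sum]
          exact Finset.sum_congr rfl fun j _ => by ring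
  -- decompose quadratic form
  have hsplit : ∑ i : M, ∑ j : M, δ i * Sh i.1 j.1 * δ j
      = (∑ i : M, ∑ j : M, δ i * S i.1 j.1 * δ j)
        + ∑ i : M, ∑ j : M, δ i * (Sh i.1 j.1 - S i.1 j.1) * δ j := by
    rw [← Finset.sum_add_distrib]
    refine Finset.sum_congr rfl fun i _ => ?_
    rw [← Finset.sum_add_distrib]
    exact Finset.sum_congr rfl fun j _ => by ring
  have hΛδ := hΛ M hM1 hMk δ
  -- Cauchy-Schwarz
  have hCS : L1 ^ 2 ≤ (M.card : ℝ) * ∑ i : M, (δ i) ^ 2 := by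
    have h := sq_sum_le_card_mul_sum_sq (s := (Finset.univ : Finset ↥M))
      (f := fun i : ↥M => |δ i|)
    simpa [hL1def, Finset.card_univ, Fintype.card_coe, sq_abs] using h
  -- combine to get L1 bound
  have hL1bound : (Λ - (k:ℝ) * D) * L1 ≤ (k:ℝ) * (DG + D * B) := by
    have hcard : (M.card : ℝ) ≤ (k:ℝ) := by exact_mod_cast hMk
    have hsq : 0 ≤ ∑ i : M, (δ i) ^ 2 := Finset.sum_nonneg fun i _ => sq_nonneg _
    rcases eq_or_lt_of_le hL10 with h0 | hl
    · rw [← h0, mul_zero]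
      positivity
    · -- Λ * ∑δ² ≤ L1(DG+DB) + D L1², and L1² ≤ card ∑δ² ≤ k ∑δ²
      have h1 : Λ * ∑ i : M, (δ i) ^ 2 ≤ L1 * (DG + D * B) + D * (L1 * L1) := by
        have := abs_le.mp hpert
        nlinarith [hΛδ, hQup, hsplit]
      have h2 : L1 ^ 2 ≤ (k:ℝ) * ∑ i : M, (δ i) ^ 2 :=
        le_trans hCS (mul_le_mul_of_nonneg_right hcard hsq)
      have hΛ0 : 0 < Λ := lt_of_le_of_lt (by positivity) hgap
      nlinarith [mul_le_mul_of_nonneg_left h1 (le_of_lt (by positivity : (0:ℝ) < (k:ℝ))),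
        mul_le_mul_of_nonneg_left h2 (le_of_lt hΛ0), mul_pos hl hl]
  -- numerator bound
  have hBhB : |Bh - B| ≤ L1 := by
    rw [hBhdef, hBdef, ← Finset.sum_sub_distrib]
    calc |∑ i : M, (|βh i| - |β i|)| ≤ ∑ i : M, abs (|βh i| - |β i|) := Finset.abs_sum_le_sum_abs _ _
      _ ≤ ∑ i : M, |δ i| := Finset.sum_le_sum fun i _ => abs_abs_sub_abs_le_abs_sub _ _
      _ = L1 := rfl
  -- finish
  have hden : (0:ℝ) < DG + D * B := hpos
  rw [div_sub_one (ne_of_gt hden), abs_div, abs_of_pos hden,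
    div_le_div_iff₀ hden hc]
  have hnum : |DG + D * Bh - (DG + D * B)| ≤ D * L1 := by
    have : DG + D * Bh - (DG + D * B) = D * (Bh - B) := by ring
    rw [this, abs_mul, abs_of_nonneg hD0]
    exact mul_le_mul_of_nonneg_left hBhB hD0
  have hfin : D * L1 * (Λ - (k:ℝ) * D) ≤ (k:ℝ) * D * (DG + D * B) := by
    calc D * L1 * (Λ - (k:ℝ) * D) = D * ((Λ - (k:ℝ) * D) * L1) := by ring
      _ ≤ D * ((k:ℝ) * (DG + D * B)) := mul_le_mul_of_nonneg_left hL1bound hD0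
      _ = (k:ℝ) * D * (DG + D * B) := by ring
  calc |DG + D * Bh - (DG + D * B)| * (Λ - (k:ℝ) * D)
      ≤ D * L1 * (Λ - (k:ℝ) * D) := mul_le_mul_of_nonneg_right hnum (le_of_lt hc)
    _ ≤ (k:ℝ) * D * (DG + D * B) := hfin
end

section
/- Let Σ̂ ∈ ℝ^{p×p} be symmetric satisfying the Restricted Isometry Property of order k with constant δ ∈ [0,1): ∥Σ̂(M) − I_{|M|}∥_op ≤ δ for all M with |M| ≤ k. Let Γ̂, Γ ∈ ℝ^p, D^Γ = ∥Γ̂ − Γ∥_∞, and suppose for a model M with |M| ≤ k: Σ̂(M)β̂_M = Γ̂(M), and ∥Σ̂(M)(β̂_M − β_M)∥_∞ ≤ D^Γ and ∥β̂_M − β_M∥₂ ≤ √k · D^Γ / Λ(k) with Λ(k) = min_{|M'|≤k} λ_min(Σ̂(M')). Then ∥β̂_M − β_M∥_∞ ≤ D^Γ (1 + δ√k/(1 − δ)). -/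
theorem stmt11 {p : ℕ} (Sh : Fin p → Fin p → ℝ) (hSh : ∀ i j, Sh i j = Sh j i)
    (k : ℕ) (δ : ℝ) (hδ0 : 0 ≤ δ) (hδ1 : δ < 1)
    (hRIP : ∀ M : Finset (Fin p), M.card ≤ k → ∀ θ : ↥M → ℝ,
      Real.sqrt (∑ i : M, ((∑ j : M, Sh i.1 j.1 * θ j) - θ i) ^ 2) ≤
        δ * Real.sqrt (∑ i : M, (θ i) ^ 2))
    (Gh G : Fin p → ℝ) (Λ : ℝ) (hΛpos : 0 < Λ) (hΛδ : 1 - δ ≤ Λ)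
    (M : Finset (Fin p)) (hMk : M.card ≤ k)
    (βh β : ↥M → ℝ)
    (hβh : ∀ i : M, ∑ j : M, Sh i.1 j.1 * βh j = Gh i.1)
    (h1 : ∀ i : M, |∑ j : M, Sh i.1 j.1 * (βh j - β j)| ≤ ‖Gh - G‖)
    (h2 : Real.sqrt (∑ i : M, (βh i - β i) ^ 2) ≤
      Real.sqrt (k : ℝ) * ‖Gh - G‖ / Λ) :
    ∀ i : M, |βh i - β i| ≤
      ‖Gh - G‖ * (1 + δ * Real.sqrt (k : ℝ) / (1 - δ)) := by
  intro i
  set θ : ↥M → ℝ := fun j => βh j - β j with hθ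
  set D : ℝ := ‖Gh - G‖ with hD
  have hD0 : 0 ≤ D := norm_nonneg _
  have h1δ : (0:ℝ) < 1 - δ := by linarith
  -- single coordinate bounded by ℓ2 norm
  have hcoord : |(∑ j : M, Sh i.1 j.1 * θ j) - θ i| ≤
      Real.sqrt (∑ j : M, ((∑ l : M, Sh j.1 l.1 * θ l) - θ j) ^ 2) := by
    rw [← Real.sqrt_sq_eq_abs]
    apply Real.sqrt_le_sqrt
    exact Finset.single_le_sum (f := fun j : M => ((∑ l : M, Sh j.1 l.1 * θ l) - θ j) ^ 2)
      (fun j _ => sq_nonneg _) (Finset.mem_univ i)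
  have hrip := hRIP M hMk θ
  have hl2 : Real.sqrt (∑ j : M, (θ j) ^ 2) ≤ Real.sqrt (k : ℝ) * D / (1 - δ) := by
    refine le_trans h2 ?_
    apply div_le_div_of_nonneg_left (by positivity) h1δ hΛδ
  have key : |(∑ j : M, Sh i.1 j.1 * θ j) - θ i| ≤ δ * (Real.sqrt (k : ℝ) * D / (1 - δ)) :=
    le_trans hcoord (le_trans hrip (by nlinarith [Real.sqrt_nonneg (∑ j : M, (θ j) ^ 2)]))
  have htri : |θ i| ≤ |∑ j : M, Sh i.1 j.1 * θ j| + |(∑ j : M, Sh i.1 j.1 * θ j) - θ i| := by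
    have heq : θ i = (∑ j : M, Sh i.1 j.1 * θ j) - ((∑ j : M, Sh i.1 j.1 * θ j) - θ i) := by
      ring
    calc |θ i| = |(∑ j : M, Sh i.1 j.1 * θ j) - ((∑ j : M, Sh i.1 j.1 * θ j) - θ i)| := by
          rw [← heq]
      _ ≤ _ := abs_sub (∑ j : M, Sh i.1 j.1 * θ j) ((∑ j : M, Sh i.1 j.1 * θ j) - θ i)
  have h1' := h1 i
  have : |θ i| ≤ D + δ * (Real.sqrt (k : ℝ) * D / (1 - δ)) := by
    calc |θ i| ≤ |∑ j : M, Sh i.1 j.1 * θ j| + |(∑ j : M, Sh i.1 j.1 * θ j) - θ i| := htri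
      _ ≤ D + δ * (Real.sqrt (k : ℝ) * D / (1 - δ)) := add_le_add h1' key
  calc |βh i - β i| = |θ i| := rfl
    _ ≤ D + δ * (Real.sqrt (k : ℝ) * D / (1 - δ)) := this
    _ = D * (1 + δ * Real.sqrt (k : ℝ) / (1 - δ)) := by field_simp
end
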